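/- Let g : ℝ → ℝ be π-periodic, let m, n be positive integers, p = gcd(m,n), q = m/p, r = n/p, μ = π/n, and h(x) = ∏_{j=0}^{r−1} g(x + j·m·μ). Then for all x, ∏_{k=1}^{p} h(x + (k−1)μ) = ∏_{i=0}^{n−1} g(x + i·μ). -/

import Mathlib

open Real

theorem stmt_5 (g : ℝ → ℝ) (hper : ∀ x, g (x + π) = g x)
    (m n : ℕ) (hm : 0 < m) (hn : 0 < n) :
    let p := Nat.gcd m n
    let r := n / p
    let μ := π / n
    let h : ℝ → ℝ := fun x => ∏ j ∈ Finset.range r, g (x + j * m * μ)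
    ∀ x, ∏ k ∈ Finset.range p, h (x + k * μ) = ∏ i ∈ Finset.range n, g (x + i * μ) := by
  intro p r μ h x
  have hp : 0 < p := Nat.gcd_pos_of_pos_left n hm
  have hpn : p ∣ n := Nat.gcd_dvd_right m n
  have hpm : p ∣ m := Nat.gcd_dvd_left m n
  obtain ⟨q, hq⟩ := hpm
  have hpr : p * r = n := Nat.mul_div_cancel' hpn
  have hqr : Nat.Coprime q r := by
    have := Nat.coprime_div_gcd_div_gcd (m := m) (n := n) hp
    have hmq : m / p = q := by rw [hq]; exact Nat.mul_div_cancel_left q hp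
    rwa [hmq] at this
  have hpi : (n : ℝ) * μ = π := by
    simp only [μ]
    field_simp [(Nat.cast_ne_zero.mpr hn.ne' : (n : ℝ) ≠ 0)]
  -- periodicity with period n in the index
  have key : ∀ (c t : ℕ), g (x + (↑(t + n * c)) * μ) = g (x + t * μ) := by
    intro c
    induction c with
    | zero => intro t; norm_num
    | succ c ih =>
      intro t
      have e : x + (↑(t + n * (c + 1)) : ℝ) * μ = (x + (↑(t + n * c) : ℝ) * μ) + π := by
        push_cast
        rw [← hpi]; ring
      rw [e, hper, ih]
  have hmod : ∀ a : ℕ, g (x + a * μ) = g (x + ((a % n : ℕ) : ℝ) * μ) := by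
    intro a
    conv_lhs => rw [← Nat.mod_add_div a n]
    exact key (a / n) (a % n)
  -- the reindexing map
  set s : Finset (ℕ × ℕ) := Finset.range p ×ˢ Finset.range r with hs
  set f : ℕ × ℕ → ℕ := fun z => (z.1 + z.2 * m) % n with hf
  have hinj : Set.InjOn f s := by
    intro z1 hz1 z2 hz2 hfz
    simp only [hs, Finset.coe_product, Set.mem_prod, Finset.mem_coe, Finset.mem_range] at hz1 hz2
    obtain ⟨hk1, hj1⟩ := hz1
    obtain ⟨hk2, hj2⟩ := hz2
    have hmodp : ∀ k j : ℕ, k < p → ((k + j * m) % n) % p = k := by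
      intro k j hk
      rw [Nat.mod_mod_of_dvd _ hpn, hq,
        show k + j * (p * q) = k + (j * q) * p by ring,
        Nat.add_mul_mod_self_right, Nat.mod_eq_of_lt hk]
    have hkeq : z1.1 = z2.1 := by
      have := congrArg (· % p) hfz
      simpa [hf, hmodp _ _ hk1, hmodp _ _ hk2] using this
    have hmeq : z1.2 * m ≡ z2.2 * m [MOD n] := by
      have h1 : z1.1 + z1.2 * m ≡ z2.1 + z2.2 * m [MOD n] := hfz
      rw [hkeq] at h1
      exact Nat.ModEq.add_left_cancel' _ h1
    have hmeq2 : z1.2 * q ≡ z2.2 * q [MOD r] := by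
      have h2 : p * (z1.2 * q) ≡ p * (z2.2 * q) [MOD p * r] := by
        have e1 : p * (z1.2 * q) = z1.2 * m := by rw [hq]; ring
        have e2 : p * (z2.2 * q) = z2.2 * m := by rw [hq]; ring
        rw [e1, e2, hpr]; exact hmeq
      have h3 := h2
      unfold Nat.ModEq at h3 ⊢
      rw [Nat.mul_mod_mul_left, Nat.mul_mod_mul_left] at h3
      exact Nat.eq_of_mul_eq_mul_left hp h3
    have hjeq : z1.2 = z2.2 := by
      have := Nat.ModEq.cancel_right_of_coprime (c := q) (by rwa [Nat.coprime_comm] at hqr) hmeq2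
      unfold Nat.ModEq at this
      rwa [Nat.mod_eq_of_lt hj1, Nat.mod_eq_of_lt hj2] at this
    exact Prod.ext hkeq hjeq
  have himg : s.image f = Finset.range n := by
    apply Finset.eq_of_subset_of_card_le
    · intro a ha
      simp only [Finset.mem_image] at ha
      obtain ⟨z, _, rfl⟩ := ha
      exact Finset.mem_range.mpr (Nat.mod_lt _ hn)
    · rw [Finset.card_image_of_injOn hinj]
      simp [hs, Finset.card_product, Finset.card_range]
      omega
  calc ∏ k ∈ Finset.range p, h (x + k * μ)
      = ∏ z ∈ s, g (x + (f z : ℝ) * μ) := by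
        rw [hs, Finset.prod_product]
        apply Finset.prod_congr rfl
        intro k hk
        apply Finset.prod_congr rfl
        intro j hj
        have e : x + (k : ℝ) * μ + (j : ℝ) * (m : ℝ) * μ
            = x + (↑(k + j * m) : ℝ) * μ := by push_cast; ring
        show g (x + ↑k * μ + ↑j * ↑m * μ) = g (x + (((k + j * m) % n : ℕ) : ℝ) * μ)
        rw [e, hmod (k + j * m)]
    _ = ∏ i ∈ Finset.range n, g (x + i * μ) := by
        rw [← himg, Finset.prod_image hinj]
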